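/- Let a, b₁, b₂ : ℝ² → ℝ be continuously differentiable and define A(x,y,z) = a(x,y)·√(1+z²) + b₁(x,y) + b₂(x,y)·z. Then for all (x,y,z) ∈ ℝ³ and every real number f, the Rashevsky expression vanishes, A''(x,y,z)·f + z·A'_y + A'_x − A_y = 0, if and only if a·f + (a_x·z − a_y)·(1+z²) = (∂b₁/∂y − ∂b₂/∂x)·(1+z²)^{3/2}. In particular, the geodesic equation of the two-dimensional Randers metric L = a·√(ẋ²+ẏ²) + b₁ẋ + b₂ẏ is a·y'' + (a_x·y' − a_y)(1+y'²) = (∂b₁/∂y − ∂b₂/∂x)(1+y'²)^{3/2}, and its right-hand side is a polynomial in y' of degree at most three (the Douglas condition) exactly when ∂b₁/∂y − ∂b₂/∂x = 0. -/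

import Mathlib

noncomputable section

/-- Partial derivative in the third variable `z`. -/
def pZ (A : ℝ → ℝ → ℝ → ℝ) : ℝ → ℝ → ℝ → ℝ := fun x y z => deriv (fun t => A x y t) z

/-- Partial derivative in the first variable `x`. -/
def pX (A : ℝ → ℝ → ℝ → ℝ) : ℝ → ℝ → ℝ → ℝ := fun x y z => deriv (fun t => A t y z) x

/-- Partial derivative in the second variable `y`. -/
def pY (A : ℝ → ℝ → ℝ → ℝ) : ℝ → ℝ → ℝ → ℝ := fun x y z => deriv (fun t => A x t z) y

/-- The associated fundamental function of a two-dimensional Randers metric in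
isothermal coordinates: `A(x,y,z) = a·√(1+z²) + b₁ + b₂·z`. -/
def RandersA (a b₁ b₂ : ℝ → ℝ → ℝ) : ℝ → ℝ → ℝ → ℝ :=
  fun x y z => a x y * Real.sqrt (1 + z ^ 2) + b₁ x y + b₂ x y * z

private lemma sqrt_hasDeriv (z : ℝ) :
    HasDerivAt (fun t : ℝ => Real.sqrt (1 + t ^ 2)) (z / Real.sqrt (1 + z ^ 2)) z := by
  have h : HasDerivAt (fun t : ℝ => 1 + t ^ 2) (2 * z) z := by
    simpa using (hasDerivAt_pow 2 z).const_add 1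
  have h2 := h.sqrt (by positivity)
  convert h2 using 1
  rw [eq_div_iff (by positivity)]
  field_simp

private lemma core_hasDeriv (z : ℝ) :
    HasDerivAt (fun t : ℝ => t / Real.sqrt (1 + t ^ 2))
      (1 / (Real.sqrt (1 + z ^ 2) * (1 + z ^ 2))) z := by
  have hq := sqrt_hasDeriv z
  have hpos : (0:ℝ) < 1 + z ^ 2 := by positivity
  have hqpos : 0 < Real.sqrt (1 + z ^ 2) := Real.sqrt_pos.mpr hpos
  have h := (hasDerivAt_id z).div hq hqpos.ne'
  refine HasDerivAt.congr_deriv (f := fun t => t / Real.sqrt (1 + t ^ 2)) h ?_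
  symm
  simp only [id_eq, one_mul]
  rw [div_eq_div_iff (by positivity) (by positivity)]
  field_simp
  rw [Real.sq_sqrt hpos.le]
  ring

private lemma diff_slice₂ {g : ℝ → ℝ → ℝ} (hg : ContDiff ℝ 1 (fun v : ℝ × ℝ => g v.1 v.2))
    (x y : ℝ) : DifferentiableAt ℝ (fun u => g x u) y :=
  ((hg.differentiable (by norm_num)) (x, y)).comp y
    (DifferentiableAt.prodMk (differentiableAt_const x) differentiableAt_id)

private lemma diff_slice₁ {g : ℝ → ℝ → ℝ} (hg : ContDiff ℝ 1 (fun v : ℝ × ℝ => g v.1 v.2))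
    (x y : ℝ) : DifferentiableAt ℝ (fun u => g u y) x :=
  by have h := ((hg.differentiable one_ne_zero) (x, y)).comp x
      (by fun_prop : DifferentiableAt ℝ (fun u : ℝ => (u, y)) x)
     exact h

private lemma pZ_eq (a b₁ b₂ : ℝ → ℝ → ℝ) (x y z : ℝ) :
    pZ (RandersA a b₁ b₂) x y z = a x y * (z / Real.sqrt (1 + z ^ 2)) + b₂ x y := by
  have h : HasDerivAt (fun t => RandersA a b₁ b₂ x y t)
      (a x y * (z / Real.sqrt (1 + z ^ 2)) + b₂ x y) z := by
    unfold RandersA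
    have := (((sqrt_hasDeriv z).const_mul (a x y)).add_const (b₁ x y)).add
      ((hasDerivAt_id z).const_mul (b₂ x y))
    simpa [Pi.add_def] using this
  exact h.deriv

section MainAux
variable (a b₁ b₂ : ℝ → ℝ → ℝ)

private lemma pZZ_eq (x y z : ℝ) :
    pZ (pZ (RandersA a b₁ b₂)) x y z
      = a x y * (1 / (Real.sqrt (1 + z ^ 2) * (1 + z ^ 2))) := by
  have hfun : (fun t => pZ (RandersA a b₁ b₂) x y t)
      = fun t => a x y * (t / Real.sqrt (1 + t ^ 2)) + b₂ x y :=
    funext fun t => pZ_eq a b₁ b₂ x y t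
  show deriv (fun t => pZ (RandersA a b₁ b₂) x y t) z = _
  rw [hfun]
  exact (((core_hasDeriv z).const_mul (a x y)).add_const (b₂ x y)).deriv

private lemma pYpZ_eq (ha : ContDiff ℝ 1 (fun v : ℝ × ℝ => a v.1 v.2))
    (hb₂ : ContDiff ℝ 1 (fun v : ℝ × ℝ => b₂ v.1 v.2)) (x y z : ℝ) :
    pY (pZ (RandersA a b₁ b₂)) x y z
      = deriv (fun u => a x u) y * (z / Real.sqrt (1 + z ^ 2))
        + deriv (fun u => b₂ x u) y := by
  have hfun : (fun u => pZ (RandersA a b₁ b₂) x u z)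
      = fun u => a x u * (z / Real.sqrt (1 + z ^ 2)) + b₂ x u :=
    funext fun u => pZ_eq a b₁ b₂ x u z
  show deriv (fun u => pZ (RandersA a b₁ b₂) x u z) y = _
  rw [hfun]
  exact (((diff_slice₂ ha x y).hasDerivAt.mul_const _).add
    (diff_slice₂ hb₂ x y).hasDerivAt).deriv

private lemma pXpZ_eq (ha : ContDiff ℝ 1 (fun v : ℝ × ℝ => a v.1 v.2))
    (hb₂ : ContDiff ℝ 1 (fun v : ℝ × ℝ => b₂ v.1 v.2)) (x y z : ℝ) :
    pX (pZ (RandersA a b₁ b₂)) x y z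
      = deriv (fun u => a u y) x * (z / Real.sqrt (1 + z ^ 2))
        + deriv (fun u => b₂ u y) x := by
  have hfun : (fun u => pZ (RandersA a b₁ b₂) u y z)
      = fun u => a u y * (z / Real.sqrt (1 + z ^ 2)) + b₂ u y :=
    funext fun u => pZ_eq a b₁ b₂ u y z
  show deriv (fun u => pZ (RandersA a b₁ b₂) u y z) x = _
  rw [hfun]
  exact (((diff_slice₁ ha x y).hasDerivAt.mul_const _).add
    (diff_slice₁ hb₂ x y).hasDerivAt).deriv

private lemma pY_eq (ha : ContDiff ℝ 1 (fun v : ℝ × ℝ => a v.1 v.2))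
    (hb₁ : ContDiff ℝ 1 (fun v : ℝ × ℝ => b₁ v.1 v.2))
    (hb₂ : ContDiff ℝ 1 (fun v : ℝ × ℝ => b₂ v.1 v.2)) (x y z : ℝ) :
    pY (RandersA a b₁ b₂) x y z
      = deriv (fun u => a x u) y * Real.sqrt (1 + z ^ 2)
        + deriv (fun u => b₁ x u) y + deriv (fun u => b₂ x u) y * z := by
  show deriv (fun u => RandersA a b₁ b₂ x u z) y = _
  unfold RandersA
  exact ((((diff_slice₂ ha x y).hasDerivAt.mul_const _).add
    (diff_slice₂ hb₁ x y).hasDerivAt).add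
    ((diff_slice₂ hb₂ x y).hasDerivAt.mul_const z)).deriv

end MainAux

private lemma cubic_iff (K : ℝ) :
    (∃ c₀ c₁ c₂ c₃ : ℝ, ∀ w : ℝ, K * (1 + w ^ 2) ^ ((3:ℝ)/2)
        = c₀ + c₁ * w + c₂ * w ^ 2 + c₃ * w ^ 3) ↔ K = 0 := by
  constructor
  · rintro ⟨c₀, c₁, c₂, c₃, h⟩
    have ht : Real.sqrt 3 ^ 2 = 3 := Real.sq_sqrt (by norm_num)
    have ht3 : Real.sqrt 3 ^ 3 = 3 * Real.sqrt 3 := by rw [pow_succ, ht]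
    have htpos : 0 < Real.sqrt 3 := Real.sqrt_pos.mpr (by norm_num)
    have e4 : (1 + Real.sqrt 3 ^ 2 : ℝ) = 4 := by rw [ht]; norm_num
    have e4' : (1 + (-Real.sqrt 3) ^ 2 : ℝ) = 4 := by rw [neg_pow]; simp [ht]; norm_num
    have h48 : (4:ℝ) ^ ((3:ℝ)/2) = 8 := by
      rw [show ((3:ℝ)/2) = (1/2)*3 by norm_num, Real.rpow_mul (by norm_num),
        show ((4:ℝ) ^ ((1:ℝ)/2)) = 2 by
          rw [show (4:ℝ) = 2 ^ 2 by norm_num, ← Real.rpow_natCast (2:ℝ) 2,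
            ← Real.rpow_mul (by norm_num)]
          norm_num]
      norm_num
    have h0 := h 0
    have h1 := h 1
    have hm1 := h (-1)
    norm_num at h0 h1 hm1
    set s : ℝ := (2:ℝ) ^ ((3:ℝ)/2) with hsdef
    have hs2 : s ^ 2 = 8 := by
      rw [hsdef, ← Real.rpow_natCast ((2:ℝ) ^ ((3:ℝ)/2)) 2, ← Real.rpow_mul (by norm_num)]
      norm_num
    have t3 := h (Real.sqrt 3)
    rw [e4, h48] at t3
    have tm3 := h (-Real.sqrt 3)
    rw [e4', h48] at tm3
    have H3 : 8 * K = c₀ + c₁ * Real.sqrt 3 + 3 * c₂ + 3 * Real.sqrt 3 * c₃ := by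
      linear_combination t3 + c₂ * ht + c₃ * ht3
    have Hm3 : 8 * K = c₀ - c₁ * Real.sqrt 3 + 3 * c₂ - 3 * Real.sqrt 3 * c₃ := by
      linear_combination tm3 + c₂ * ht - c₃ * ht3
    have ec13 : Real.sqrt 3 * (c₁ + 3 * c₃) = 0 := by linear_combination (Hm3 - H3) / 2
    have ec13' : c₁ + 3 * c₃ = 0 := by
      rcases mul_eq_zero.mp ec13 with h' | h'
      · exact absurd h' htpos.ne'
      · exact h'
    have ec11 : c₁ + c₃ = 0 := by linarith [h1, hm1]
    have hc3 : c₃ = 0 := by linarith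
    have hc1 : c₁ = 0 := by linarith
    have key : K * (3 * s - 10) = 0 := by
      linear_combination 3 * h1 - H3 - 2 * h0 + (3 - Real.sqrt 3) * hc1
        + (3 - 3 * Real.sqrt 3) * hc3
    rcases mul_eq_zero.mp key with h' | h'
    · exact h'
    · nlinarith [hs2, h']
  · rintro rfl
    exact ⟨0, 0, 0, 0, fun w => by simp⟩

/-- for the Randers metric `L = a·√(ẋ²+ẏ²) + b₁ẋ + b₂ẏ`, the Rashevsky
expression in `f` vanishes iff `a·f + (aₓz − a_y)(1+z²) = (∂b₁/∂y − ∂b₂/∂x)(1+z²)^{3/2}`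
(the geodesic equation); and the right-hand side is a polynomial of degree at most three
(the Douglas condition) exactly when `∂b₁/∂y − ∂b₂/∂x = 0`. -/
theorem stmt_6 (a b₁ b₂ : ℝ → ℝ → ℝ)
    (ha : ContDiff ℝ 1 (fun v : ℝ × ℝ => a v.1 v.2))
    (hb₁ : ContDiff ℝ 1 (fun v : ℝ × ℝ => b₁ v.1 v.2))
    (hb₂ : ContDiff ℝ 1 (fun v : ℝ × ℝ => b₂ v.1 v.2)) :
    ∀ x y z f : ℝ,
      (pZ (pZ (RandersA a b₁ b₂)) x y z * f + z * pY (pZ (RandersA a b₁ b₂)) x y z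
          + pX (pZ (RandersA a b₁ b₂)) x y z - pY (RandersA a b₁ b₂) x y z = 0 ↔
        a x y * f + (deriv (fun u => a u y) x * z - deriv (fun u => a x u) y) * (1 + z ^ 2)
          = (deriv (fun u => b₁ x u) y - deriv (fun u => b₂ u y) x)
              * (1 + z ^ 2) ^ ((3 : ℝ) / 2)) ∧
      ((∃ c₀ c₁ c₂ c₃ : ℝ, ∀ w : ℝ,
          (deriv (fun u => b₁ x u) y - deriv (fun u => b₂ u y) x)
              * (1 + w ^ 2) ^ ((3 : ℝ) / 2)
            = c₀ + c₁ * w + c₂ * w ^ 2 + c₃ * w ^ 3) ↔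
        deriv (fun u => b₁ x u) y - deriv (fun u => b₂ u y) x = 0) := by
  intro x y z f
  refine ⟨?_, cubic_iff _⟩
  have hpos : (0:ℝ) < 1 + z ^ 2 := by positivity
  have hqpos : 0 < Real.sqrt (1 + z ^ 2) := Real.sqrt_pos.mpr hpos
  have hs : Real.sqrt (1 + z ^ 2) ^ 2 = 1 + z ^ 2 := Real.sq_sqrt hpos.le
  have hr : (1 + z ^ 2) ^ ((3:ℝ)/2) = Real.sqrt (1 + z ^ 2) ^ 3 := by
    rw [show ((3:ℝ)/2) = (1/2)*3 by norm_num, Real.rpow_mul hpos.le,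
      ← Real.sqrt_eq_rpow, show ((3:ℝ)) = ((3:ℕ):ℝ) by norm_num, Real.rpow_natCast]
  rw [pZZ_eq, pYpZ_eq a b₁ b₂ ha hb₂, pXpZ_eq a b₁ b₂ ha hb₂,
    pY_eq a b₁ b₂ ha hb₁ hb₂, hr]
  set s := Real.sqrt (1 + z ^ 2) with hsdef
  set A := a x y
  set AX := deriv (fun u => a u y) x
  set AY := deriv (fun u => a x u) y
  set B1Y := deriv (fun u => b₁ x u) y
  set B2X := deriv (fun u => b₂ u y) x
  set B2Y := deriv (fun u => b₂ x u) y
  rw [show (1 + z ^ 2) = s ^ 2 from hs.symm]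
  have hkey : A * (1 / (s * s ^ 2)) * f + z * (AY * (z / s) + B2Y)
      + (AX * (z / s) + B2X) - (AY * s + B1Y + B2Y * z)
      = ((A * f + (AX * z - AY) * s ^ 2) - (B1Y - B2X) * s ^ 3) / s ^ 3 := by
    rw [eq_div_iff (by positivity)]
    field_simp
    linear_combination (-AY * s ^ 2) * hs
  rw [hkey, div_eq_zero_iff]
  have h3 : s ^ 3 ≠ 0 := by positivity
  simp only [h3, or_false]
  exact sub_eq_zero
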